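/- Sequential composition is nonexpansive in its second argument: for all P, Q, Q' in T↓, d_U(P ; Q, P ; Q') ≤ d_U(Q, Q'). -/

import Mathlib

open scoped Classical

namespace CSPLL

variable {E : Type*}

/-- Events: `none` is the termination signal ✓, `some a` is a visible event. -/
abbrev Ev (E : Type*) := Option E

/-- A member of `Σ^{*✓}`: the termination event ✓ may occur only as the last element. -/
def ValidTrace (s : List (Ev E)) : Prop := (none : Ev E) ∉ s.dropLast

/-- The semantic domain `T↓`: pairs `(T, D)` of (behavioural) traces and divergences
satisfying the axioms of the divergence-strict traces model. -/
structure TD (E : Type*) where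
  T : Set (List (Ev E))
  D : Set (List (Ev E))
  valid : ∀ s ∈ T, ValidTrace s
  d_sub : D ⊆ T
  nonempty : [] ∈ T
  prefix_closed : ∀ s t : List (Ev E), s ++ t ∈ T → s ∈ T
  tick_div : ∀ s : List (Ev E), s ++ [none] ∈ D → s ∈ D
  div_ext : ∀ s t : List (Ev E), s ∈ D → (none : Ev E) ∉ s → ValidTrace t → s ++ t ∈ D

/-- Raw trace/divergence pairs. -/
abbrev Pair (E : Type*) := Set (List (Ev E)) × Set (List (Ev E))

def TD.pair (P : TD E) : Pair E := (P.T, P.D)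

/-- `lengthU U s` counts the occurrences of events from `U` in the trace `s`. -/
noncomputable def lengthU (U : Set E) (s : List (Ev E)) : ℕ :=
  (s.filter fun x => decide (∃ a ∈ U, x = some a)).length

/-- Restriction `(T,D) ↾_U n` of a trace/divergence pair to `U`-length `n`. -/
noncomputable def restrict (U : Set E) (n : ℕ) (P : Pair E) : Pair E :=
  let D' := P.2 ∪ {u | ∃ s t, s ∈ P.1 ∧ (none : Ev E) ∉ s ∧ lengthU U s = n ∧
                       ValidTrace t ∧ u = s ++ t}
  (D' ∪ {s ∈ P.1 | lengthU U s ≤ n}, D')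

/-- The metric `d_U(P,Q) = inf {2^{-n} | P ↾_U n = Q ↾_U n}` (taken in `[0,1]`). -/
noncomputable def dU (U : Set E) (P Q : Pair E) : ℝ :=
  sInf {x : ℝ | ∃ n : ℕ, restrict U n P = restrict U n Q ∧ x = (1 / 2 : ℝ) ^ n}

noncomputable def dTD (U : Set E) (P Q : TD E) : ℝ := dU U P.pair Q.pair

/-- Sequential composition `P ; Q` on trace/divergence pairs. -/
def seqP (P Q : TD E) : Pair E :=
  let D' := P.D ∪ {x | ∃ t s, t ++ [(none : Ev E)] ∈ P.T ∧ s ∈ Q.D ∧ x = t ++ s}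
  (D' ∪ {s ∈ P.T | (none : Ev E) ∉ s} ∪
     {x | ∃ t s, t ++ [(none : Ev E)] ∈ P.T ∧ s ∈ Q.T ∧ x = t ++ s}, D')

theorem mem_restrict_snd {U : Set E} {n : ℕ} {R : Pair E} {u : List (Ev E)} :
    u ∈ (restrict U n R).2 ↔ u ∈ R.2 ∨ ∃ s t, s ∈ R.1 ∧ (none : Ev E) ∉ s ∧
      lengthU U s = n ∧ ValidTrace t ∧ u = s ++ t := by
  simp [restrict]

theorem mem_restrict_fst {U : Set E} {n : ℕ} {R : Pair E} {u : List (Ev E)} :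
    u ∈ (restrict U n R).1 ↔ u ∈ (restrict U n R).2 ∨ (u ∈ R.1 ∧ lengthU U u ≤ n) :=
  Iff.rfl

theorem mem_seqP_snd {P Q : TD E} {u : List (Ev E)} :
    u ∈ (seqP P Q).2 ↔ u ∈ P.D ∨ ∃ t s, t ++ [(none : Ev E)] ∈ P.T ∧ s ∈ Q.D ∧ u = t ++ s := by
  simp [seqP]

theorem mem_seqP_fst {P Q : TD E} {u : List (Ev E)} :
    u ∈ (seqP P Q).1 ↔ u ∈ (seqP P Q).2 ∨ (u ∈ P.T ∧ (none : Ev E) ∉ u) ∨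
      ∃ t s, t ++ [(none : Ev E)] ∈ P.T ∧ s ∈ Q.T ∧ u = t ++ s :=
  or_assoc

theorem lengthU_append (U : Set E) (s t : List (Ev E)) :
    lengthU U (s ++ t) = lengthU U s + lengthU U t := by
  simp [lengthU]

theorem exists_split (U : Set E) : ∀ (s : List (Ev E)) (m : ℕ), m ≤ lengthU U s →
    ∃ p q, s = p ++ q ∧ lengthU U p = m := by
  intro s
  induction s with
  | nil =>
    intro m hm
    simp [lengthU] at hm
    exact ⟨[], [], rfl, by simp [lengthU, hm]⟩
  | cons a s ih =>
    intro m hm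
    rcases Nat.eq_zero_or_pos m with h0 | h1
    · exact ⟨[], a :: s, rfl, by simp [lengthU, h0]⟩
    · have hsplit : lengthU U (a :: s) = lengthU U [a] + lengthU U s := by
        simpa using lengthU_append U [a] s
      have hc : lengthU U [a] ≤ 1 := by
        exact List.length_filter_le (fun x => decide (∃ a ∈ U, x = some a)) [a]
      have hle : m - lengthU U [a] ≤ lengthU U s := by omega
      obtain ⟨p, q, hpq, hp⟩ := ih _ hle
      refine ⟨a :: p, q, by rw [hpq]; rfl, ?_⟩
      have : lengthU U (a :: p) = lengthU U [a] + lengthU U p := by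
        simpa using lengthU_append U [a] p
      omega

theorem validTrace_append {s t : List (Ev E)} (hs : (none : Ev E) ∉ s) (ht : ValidTrace t) :
    ValidTrace (s ++ t) := by
  unfold ValidTrace at *
  rcases eq_or_ne t [] with rfl | hne
  · simpa using fun h => hs ((List.dropLast_sublist s).mem h)
  · rw [List.dropLast_append_of_ne_nil hne]
    simp [hs, ht]

theorem not_none_of_tick {P : TD E} {t : List (Ev E)} (h : t ++ [(none : Ev E)] ∈ P.T) :
    (none : Ev E) ∉ t := by
  have := P.valid _ h
  unfold ValidTrace at this
  simpa using this


/-- Key lemma: appending a terminated trace of `P` in front of a member of the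
"chopped" part `X_n` of `Q'` lands in the chopped part of `P ; Q'`. -/
theorem mem_Xn_seq {U : Set E} {n : ℕ} {P Q' : TD E} {t b c : List (Ev E)}
    (ht : t ++ [(none : Ev E)] ∈ P.T) (hb : b ∈ Q'.T) (hbn : (none : Ev E) ∉ b)
    (hlb : lengthU U b = n) (hc : ValidTrace c) :
    ∃ p r, p ∈ (seqP P Q').1 ∧ (none : Ev E) ∉ p ∧ lengthU U p = n ∧ ValidTrace r ∧
      t ++ (b ++ c) = p ++ r := by
  have htn : (none : Ev E) ∉ t := not_none_of_tick ht
  have hlen : n ≤ lengthU U (t ++ b) := by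
    rw [lengthU_append]; omega
  obtain ⟨p, q, hpq, hp⟩ := exists_split U (t ++ b) n hlen
  -- t ++ b = p ++ q
  rcases List.append_eq_append_iff.mp hpq.symm with ⟨a', hp', hq'⟩ | ⟨c', ht', hq'⟩
  ·
    -- append_eq_append_iff : a ++ b = c ++ d ↔ (∃ a', c = a ++ a' ∧ b = a' ++ d) ∨ ∃ c', a = c ++ c' ∧ d = c' ++ b
    -- here a = p, b' = q, c = t, d = b. first case: t = p ++ a', q = a' ++ b
    -- p is a prefix of t
    refine ⟨p, q ++ c, ?_, ?_, hp, ?_, ?_⟩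
    · rw [mem_seqP_fst]
      refine Or.inr (Or.inl ⟨?_, ?_⟩)
      · exact P.prefix_closed p (a' ++ [none]) (by rw [← List.append_assoc, ← hp']; exact ht)
      · intro h; exact htn (hp' ▸ List.mem_append_left _ h)
    · intro h; exact htn (hp' ▸ List.mem_append_left _ h)
    · refine validTrace_append ?_ hc
      intro h; rw [hq'] at h
      rcases List.mem_append.mp h with h | h
      · exact htn (hp' ▸ List.mem_append_right _ h)
      · exact hbn h
    · rw [← List.append_assoc, hpq, List.append_assoc]
  · -- second case: p = t ++ c', b = c' ++ q
    refine ⟨p, q ++ c, ?_, ?_, hp, ?_, ?_⟩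
    · rw [mem_seqP_fst]
      refine Or.inr (Or.inr ⟨t, c', ht, ?_, ht'⟩)
      exact Q'.prefix_closed c' q (by rw [← hq']; exact hb)
    · intro h; rw [ht'] at h
      rcases List.mem_append.mp h with h | h
      · exact htn h
      · exact hbn (hq' ▸ List.mem_append_left _ h)
    · refine validTrace_append (fun h => hbn (hq' ▸ List.mem_append_right _ h)) hc
    · rw [← List.append_assoc, hpq, List.append_assoc]

theorem restrict_seq_subset {U : Set E} {n : ℕ} (P Q Q' : TD E)
    (hD : (restrict U n Q.pair).2 ⊆ (restrict U n Q'.pair).2)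
    (hT : (restrict U n Q.pair).1 ⊆ (restrict U n Q'.pair).1) :
    (restrict U n (seqP P Q)).2 ⊆ (restrict U n (seqP P Q')).2 ∧
    (restrict U n (seqP P Q)).1 ⊆ (restrict U n (seqP P Q')).1 := by
  have hQpairT : Q.pair.1 = Q.T := rfl
  -- from membership in (restrict U n Q'.pair).2, produce the conclusion
  -- helper: base p with p ∈ (seqP P Q').1, ✓∉p, ℓ p = n, valid r gives membership in restricted D
  have base : ∀ {p r u : List (Ev E)}, p ∈ (seqP P Q').1 → (none : Ev E) ∉ p →
      lengthU U p = n → ValidTrace r → u = p ++ r → u ∈ (restrict U n (seqP P Q')).2 := by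
    intro p r u h1 h2 h3 h4 h5
    exact mem_restrict_snd.mpr (Or.inr ⟨p, r, h1, h2, h3, h4, h5⟩)
  -- helper: membership through a Q-trace s appearing after a terminated P-trace t,
  -- where s is known to be in the restricted divergences of Q'
  have viaD : ∀ {t s u : List (Ev E)}, t ++ [(none : Ev E)] ∈ P.T →
      s ∈ (restrict U n Q'.pair).2 → u = t ++ s → u ∈ (restrict U n (seqP P Q')).2 := by
    intro t s u ht hs hu
    rcases mem_restrict_snd.mp hs with hs | ⟨b, c, hb, hbn, hlb, hc, rfl⟩
    · exact mem_restrict_snd.mpr (Or.inl (mem_seqP_snd.mpr (Or.inr ⟨t, s, ht, hs, hu⟩)))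
    · obtain ⟨p, r, h1, h2, h3, h4, h5⟩ := mem_Xn_seq (U := U) ht hb hbn hlb hc
      exact base h1 h2 h3 h4 (hu.trans h5)
  have hDpart : (restrict U n (seqP P Q)).2 ⊆ (restrict U n (seqP P Q')).2 := by
    intro u hu
    rcases mem_restrict_snd.mp hu with hu | ⟨p, r, hp, hpn, hlp, hr, rfl⟩
    · -- u ∈ (seqP P Q).2
      rcases mem_seqP_snd.mp hu with hu | ⟨t, s, ht, hs, rfl⟩
      · exact mem_restrict_snd.mpr (Or.inl (mem_seqP_snd.mpr (Or.inl hu)))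
      · -- s ∈ Q.D
        have : s ∈ (restrict U n Q'.pair).2 := hD (mem_restrict_snd.mpr (Or.inl hs))
        exact viaD ht this rfl
    · -- u = p ++ r with p ∈ (seqP P Q).1, ✓∉p, ℓ p = n
      rcases mem_seqP_fst.mp hp with hp | hp | ⟨t, s, ht, hs, rfl⟩
      · rcases mem_seqP_snd.mp hp with hp | ⟨t, s, ht, hs, rfl⟩
        · -- p ∈ P.D ⊆ (seqP P Q').2 ⊆ (seqP P Q').1
          exact base (mem_seqP_fst.mpr (Or.inl (mem_seqP_snd.mpr (Or.inl hp)))) hpn hlp hr rfl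
        · -- p = t ++ s, s ∈ Q.D
          have hs' : s ∈ (restrict U n Q'.pair).2 := hD (mem_restrict_snd.mpr (Or.inl hs))
          rcases mem_restrict_snd.mp hs' with hs' | ⟨b, c, hb, hbn, hlb, hc, rfl⟩
          · -- s ∈ Q'.D : p ∈ (seqP P Q').2
            exact base (mem_seqP_fst.mpr (Or.inl (mem_seqP_snd.mpr
              (Or.inr ⟨t, s, ht, hs', rfl⟩)))) hpn hlp hr rfl
          · -- s = b ++ c
            have hcn : (none : Ev E) ∉ c := by
              intro h; exact hpn (List.mem_append_right t (List.mem_append_right b h))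
            obtain ⟨p', r', h1, h2, h3, h4, h5⟩ := mem_Xn_seq (U := U) (c := c ++ r)
              ht hb hbn hlb (validTrace_append hcn hr)
            refine base h1 h2 h3 h4 ?_
            rw [← h5]; simp [List.append_assoc]
      · -- p ∈ P.T, ✓ ∉ p
        exact base (mem_seqP_fst.mpr (Or.inr (Or.inl hp))) hpn hlp hr rfl
      · -- p = t ++ s, s ∈ Q.T ; then ℓ s ≤ n
        have hls : lengthU U s ≤ n := by
          have := lengthU_append U t s; omega
        have hs' : s ∈ (restrict U n Q'.pair).1 :=
          hT (mem_restrict_fst.mpr (Or.inr ⟨hs, hls⟩))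
        rcases mem_restrict_fst.mp hs' with hs' | ⟨hs', _⟩
        · rcases mem_restrict_snd.mp hs' with hs' | ⟨b, c, hb, hbn, hlb, hc, rfl⟩
          · exact base (mem_seqP_fst.mpr (Or.inl (mem_seqP_snd.mpr
              (Or.inr ⟨t, s, ht, hs', rfl⟩)))) hpn hlp hr rfl
          · have hcn : (none : Ev E) ∉ c := by
              intro h; exact hpn (List.mem_append_right t (List.mem_append_right b h))
            obtain ⟨p', r', h1, h2, h3, h4, h5⟩ := mem_Xn_seq (U := U) (c := c ++ r)
              ht hb hbn hlb (validTrace_append hcn hr)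
            refine base h1 h2 h3 h4 ?_
            rw [← h5]; simp [List.append_assoc]
        · -- s ∈ Q'.T
          exact base (mem_seqP_fst.mpr (Or.inr (Or.inr ⟨t, s, ht, hs', rfl⟩))) hpn hlp hr rfl
  refine ⟨hDpart, ?_⟩
  intro u hu
  rcases mem_restrict_fst.mp hu with hu | ⟨hu, hlu⟩
  · exact mem_restrict_fst.mpr (Or.inl (hDpart hu))
  · rcases mem_seqP_fst.mp hu with hu | hu | ⟨t, s, ht, hs, rfl⟩
    · exact mem_restrict_fst.mpr (Or.inl (hDpart
        (mem_restrict_snd.mpr (Or.inl hu))))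
    · exact mem_restrict_fst.mpr (Or.inr ⟨mem_seqP_fst.mpr (Or.inr (Or.inl hu)), hlu⟩)
    · have hls : lengthU U s ≤ n := by
        have := lengthU_append U t s; omega
      have hs' : s ∈ (restrict U n Q'.pair).1 :=
        hT (mem_restrict_fst.mpr (Or.inr ⟨hs, hls⟩))
      rcases mem_restrict_fst.mp hs' with hs' | ⟨hs', _⟩
      · exact mem_restrict_fst.mpr (Or.inl (viaD ht hs' rfl))
      · exact mem_restrict_fst.mpr (Or.inr
          ⟨mem_seqP_fst.mpr (Or.inr (Or.inr ⟨t, s, ht, hs', rfl⟩)), hlu⟩)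

theorem restrict_seq_eq {U : Set E} {n : ℕ} (P Q Q' : TD E)
    (h : restrict U n Q.pair = restrict U n Q'.pair) :
    restrict U n (seqP P Q) = restrict U n (seqP P Q') := by
  have h1 := restrict_seq_subset (U := U) (n := n) P Q Q' (h ▸ Set.Subset.rfl) (h ▸ Set.Subset.rfl)
  have h2 := restrict_seq_subset (U := U) (n := n) P Q' Q (h ▸ Set.Subset.rfl) (h ▸ Set.Subset.rfl)
  exact Prod.ext (Set.Subset.antisymm h1.2 h2.2) (Set.Subset.antisymm h1.1 h2.1)

theorem restrict_zero (U : Set E) (R : TD E) :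
    restrict U 0 R.pair = ({t | ValidTrace t}, {t | ValidTrace t}) := by
  have hsnd : (restrict U 0 R.pair).2 = {t | ValidTrace t} := by
    ext u
    rw [mem_restrict_snd]
    constructor
    · rintro (hu | ⟨s, t, hs, hsn, _, ht, rfl⟩)
      · exact R.valid _ (R.d_sub hu)
      · exact validTrace_append hsn ht
    · intro hu
      exact Or.inr ⟨[], u, R.nonempty, by simp, by simp [lengthU], hu, by simp⟩
  refine Prod.ext ?_ hsnd
  ext u
  rw [mem_restrict_fst, hsnd]
  constructor
  · rintro (hu | ⟨hu, _⟩)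
    · exact hu
    · exact R.valid _ hu
  · exact Or.inl

/-- Sequential composition is nonexpansive in its second argument. -/
theorem seq_nonexpansive_right (U : Set E) (P Q Q' : TD E) :
    dU U (seqP P Q) (seqP P Q') ≤ dU U Q.pair Q'.pair := by
  unfold dU
  apply csInf_le_csInf
  · exact ⟨0, by rintro x ⟨n, -, rfl⟩; positivity⟩
  · refine ⟨1, 0, ?_, by norm_num⟩
    rw [restrict_zero, restrict_zero]
  · rintro x ⟨n, hn, rfl⟩
    exact ⟨n, restrict_seq_eq P Q Q' hn, rfl⟩

end CSPLL
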